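/- Let n be odd and let C ⊆ F4^n be an F4-linear skew-cyclic code of dimension k and minimum distance d. Then there exists a permutation π of {1, …, 2n} such that the permuted code C' = {(v_{π(1)}, …, v_{π(2n)}) : v ∈ S(C)} is an additive cyclic code of length 2n with 2^{2k} codewords and minimum distance 2d: C' is an additive subgroup of F4^{2n} invariant under the cyclic coordinate shift. -/

import Mathlib

abbrev F4 : Type := GaloisField 2 2
noncomputable instance : Fintype F4 := Fintype.ofFinite _
noncomputable instance : DecidableEq F4 := Classical.decEq _

/-- The map `S : F4^n → F4^{2n}`, sending `(v_0,…,v_{n-1})` to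
`(v_0, v_0², v_1, v_1², …, v_{n-1}, v_{n-1}²)` (conjugation on `F4` is squaring). -/
noncomputable def Smap (n : ℕ) (v : Fin n → F4) : Fin (2 * n) → F4 :=
  fun i =>
    if i.val % 2 = 0 then v ⟨i.val / 2, by have h := i.isLt; omega⟩
    else (v ⟨i.val / 2, by have h := i.isLt; omega⟩) ^ 2

/-- The code obtained from `C` by permuting coordinates by `π`:
`v' = (v_{π(1)}, …, v_{π(m)})` for `v ∈ C`. -/
def permCode {m : ℕ} (π : Equiv.Perm (Fin m)) (C : Set (Fin m → F4)) :
    Set (Fin m → F4) :=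
  (fun v => fun i => v (π i)) '' C

/-- The minimum Hamming weight of the nonzero elements of a code, which is the
minimum distance of an additive code. -/
noncomputable def minWt {m : ℕ} (C : Set (Fin m → F4)) : ℕ :=
  sInf {r : ℕ | ∃ v ∈ C, v ≠ 0 ∧ r = hammingNorm v}

lemma F4_card : Fintype.card F4 = 4 := by
  rw [← Nat.card_eq_fintype_card, GaloisField.card 2 2 (by norm_num)]; norm_num

lemma F4_pow_four (x : F4) : x ^ 4 = x := by
  have := FiniteField.pow_card x
  rwa [F4_card] at this

lemma F4_neg (x : F4) : -x = x := CharTwo.neg_eq x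

lemma F4_add_sq (x y : F4) : (x + y) ^ 2 = x ^ 2 + y ^ 2 := add_pow_char x y 2

section aux
variable (n : ℕ) [NeZero n]

lemma npos : 0 < n := Nat.pos_of_ne_zero (NeZero.ne n)

/-- interleaved version indexed by residues mod 2 and mod n -/
noncomputable def gmap (v : Fin n → F4) : Fin (2 * n) → F4 :=
  fun i => if i.val % 2 = 0 then v ⟨i.val % n, Nat.mod_lt _ (npos n)⟩
    else v ⟨i.val % n, Nat.mod_lt _ (npos n)⟩ ^ 2

def piFun : Fin (2 * n) → Fin (2 * n) :=
  fun i => ⟨2 * (i.val % n) + i.val % 2, by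
    have h1 : i.val % n < n := Nat.mod_lt _ (npos n)
    have h2 : i.val % 2 < 2 := Nat.mod_lt _ (by norm_num)
    omega⟩

lemma piFun_injective (hodd : Odd n) : Function.Injective (piFun n) := by
  intro i j h
  have hv : 2 * (i.val % n) + i.val % 2 = 2 * (j.val % n) + j.val % 2 :=
    congrArg Fin.val h
  have h1 : i.val % n < n := Nat.mod_lt _ (npos n)
  have h2 : j.val % n < n := Nat.mod_lt _ (npos n)
  have h3 : i.val % 2 < 2 := Nat.mod_lt _ (by norm_num)
  have h4 : j.val % 2 < 2 := Nat.mod_lt _ (by norm_num)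
  have e2 : i.val % 2 = j.val % 2 := by omega
  have en : i.val % n = j.val % n := by omega
  have hco : Nat.Coprime 2 n := Nat.coprime_two_left.mpr hodd
  have hm : i.val ≡ j.val [MOD 2 * n] :=
    (Nat.modEq_and_modEq_iff_modEq_mul hco).mp ⟨e2, en⟩
  have : i.val = j.val := by
    have hi := i.isLt; have hj := j.isLt
    unfold Nat.ModEq at hm
    rwa [Nat.mod_eq_of_lt hi, Nat.mod_eq_of_lt hj] at hm
  exact Fin.ext this

noncomputable def piPerm (hodd : Odd n) : Equiv.Perm (Fin (2 * n)) :=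
  Equiv.ofBijective (piFun n)
    (Finite.injective_iff_bijective.mp (piFun_injective n hodd))

lemma Smap_piPerm (hodd : Odd n) (v : Fin n → F4) :
    (fun i => Smap n v (piPerm n hodd i)) = gmap n v := by
  funext i
  have hval : (piPerm n hodd i).val = 2 * (i.val % n) + i.val % 2 := rfl
  have h3 : i.val % 2 < 2 := Nat.mod_lt _ (by norm_num)
  have hmod : (piPerm n hodd i).val % 2 = i.val % 2 := by omega
  have hdiv : (piPerm n hodd i).val / 2 = i.val % n := by omega
  simp only [Smap, gmap, hmod, hdiv]

lemma Smap_injective : Function.Injective (Smap n) := by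
  intro v w h
  funext j
  have h2 : 2 * j.val < 2 * n := by have := j.isLt; omega
  have hc := congrFun h ⟨2 * j.val, h2⟩
  have hmod : (2 * j.val) % 2 = 0 := Nat.mul_mod_right 2 j.val
  have hj : (⟨(2 * j.val) / 2, by omega⟩ : Fin n) = j := Fin.ext (by show 2 * j.val / 2 = j.val; omega)
  simpa [Smap, hmod, hj] using hc

lemma gmap_injective (hodd : Odd n) : Function.Injective (gmap n) := by
  intro v w h
  apply Smap_injective n
  funext i
  have h1 := congrFun (Smap_piPerm n hodd v) ((piPerm n hodd).symm i)
  have h2 := congrFun (Smap_piPerm n hodd w) ((piPerm n hodd).symm i)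
  simp only [Equiv.apply_symm_apply] at h1 h2
  rw [h1, h2, h]

lemma gmap_zero : gmap n 0 = 0 := by
  funext i
  simp only [gmap]
  split <;> simp

lemma gmap_add (v w : Fin n → F4) : gmap n (v + w) = gmap n v + gmap n w := by
  funext i
  simp only [gmap, Pi.add_apply]
  split <;> simp [F4_add_sq]

lemma gmap_shift (v : Fin n → F4) :
    (fun i : Fin (2 * n) => gmap n v (i - 1)) =
      gmap n (fun j : Fin n => v (j - 1) ^ 2) := by
  have hn := npos n
  have h2n : 1 < 2 * n := by omega
  funext i
  have hx : (i - 1 : Fin (2 * n)).val = ((2 * n - 1) + i.val) % (2 * n) := by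
    rw [Fin.sub_def]
    simp only [Fin.val_one', Nat.mod_eq_of_lt h2n]
  have hpar : (i - 1 : Fin (2 * n)).val % 2 = (i.val + 1) % 2 := by
    rw [hx, Nat.mod_mod_of_dvd _ ⟨n, rfl⟩]
    omega
  have hkey : (i - 1 : Fin (2 * n)).val % n = ((n - 1 % n) + i.val % n) % n := by
    rw [hx]
    have d1 : ((2 * n - 1) + i.val) % (2 * n) ≡ (2 * n - 1) + i.val [MOD n] :=
      ((Nat.mod_modEq _ _).of_dvd ⟨2, by ring⟩)
    have d2 : (2 * n - 1) + i.val ≡ (n - 1 % n) + i.val % n [MOD n] := by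
      apply Nat.ModEq.add
      · rcases eq_or_lt_of_le (show 1 ≤ n from npos n) with h1 | h1
        · simp [← h1, Nat.modEq_one]
        · show (2 * n - 1) % n = (n - 1 % n) % n
          rw [Nat.mod_eq_of_lt h1, show 2 * n - 1 = (n - 1) + n by omega,
            Nat.add_mod_right]
      · exact (Nat.mod_modEq _ _).symm
    exact d1.trans d2
  have hfin : (⟨(i - 1 : Fin (2 * n)).val % n, Nat.mod_lt _ (npos n)⟩ : Fin n)
      = (⟨i.val % n, Nat.mod_lt _ (npos n)⟩ : Fin n) - 1 := by
    apply Fin.ext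
    show (i - 1 : Fin (2 * n)).val % n = _
    rw [hkey, Fin.sub_def]
    simp only [Fin.val_one']
  simp only [gmap]
  rcases Nat.even_or_odd i.val with he | ho
  · have hi2 : i.val % 2 = 0 := Nat.even_iff.mp he
    have hx2 : (i - 1 : Fin (2 * n)).val % 2 = 1 := by rw [hpar]; omega
    rw [if_neg (by omega), if_pos hi2, hfin]
  · have hi2 : i.val % 2 = 1 := Nat.odd_iff.mp ho
    have hx2 : (i - 1 : Fin (2 * n)).val % 2 = 0 := by rw [hpar]; omega
    rw [if_pos hx2, if_neg (by omega), hfin, ← pow_mul]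
    exact (F4_pow_four _).symm

lemma card_two_to_one (p : Fin n → Prop) [DecidablePred p] :
    Fintype.card {i : Fin (2 * n) // p ⟨i.val % n, Nat.mod_lt _ (npos n)⟩}
      = 2 * Fintype.card {j : Fin n // p j} := by
  have hn := npos n
  let e : {i : Fin (2 * n) // p ⟨i.val % n, Nat.mod_lt _ (npos n)⟩}
      ≃ Fin 2 × {j : Fin n // p j} :=
    { toFun := fun x => (⟨x.1.val / n, (Nat.div_lt_iff_lt_mul (npos n)).mpr (by have := x.1.isLt; omega)⟩,
        ⟨⟨x.1.val % n, Nat.mod_lt _ (npos n)⟩, x.2⟩)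
      invFun := fun y => ⟨⟨n * y.1.val + y.2.1.val, by
          have h1 := y.1.isLt; have h2 := y.2.1.isLt
          have h3 : n * y.1.val ≤ n * 1 := Nat.mul_le_mul_left n (by omega)
          omega⟩, by
          have h2 := y.2.1.isLt
          have hm : (n * y.1.val + y.2.1.val) % n = y.2.1.val := by
            rw [Nat.mul_add_mod, Nat.mod_eq_of_lt h2]
          have he : (⟨(n * y.1.val + y.2.1.val) % n, Nat.mod_lt _ (npos n)⟩ : Fin n)
              = y.2.1 := Fin.ext hm
          rw [he]; exact y.2.2⟩
      left_inv := fun x => by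
        apply Subtype.ext
        apply Fin.ext
        exact Nat.div_add_mod x.1.val n
      right_inv := fun y => by
        have h2 := y.2.1.isLt
        have hd : (n * y.1.val + y.2.1.val) / n = y.1.val := by
          rw [Nat.mul_add_div hn, Nat.div_eq_of_lt h2, Nat.add_zero]
        have hm : (n * y.1.val + y.2.1.val) % n = y.2.1.val := by
          rw [Nat.mul_add_mod, Nat.mod_eq_of_lt h2]
        ext
        · exact hd
        · exact hm }
  rw [Fintype.card_congr e, Fintype.card_prod, Fintype.card_fin]

lemma gmap_norm (v : Fin n → F4) : hammingNorm (gmap n v) = 2 * hammingNorm v := by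
  classical
  have h1 : ∀ i : Fin (2 * n),
      (gmap n v i ≠ 0 ↔ v ⟨i.val % n, Nat.mod_lt _ (npos n)⟩ ≠ 0) := by
    intro i
    simp only [gmap]
    split
    · exact Iff.rfl
    · simp [pow_eq_zero_iff]
  unfold hammingNorm
  have hfe : (Finset.univ.filter fun i : Fin (2 * n) => gmap n v i ≠ 0)
      = Finset.univ.filter
        (fun i : Fin (2 * n) => v ⟨i.val % n, Nat.mod_lt _ (npos n)⟩ ≠ 0) := by
    apply Finset.filter_congr
    intro i _
    exact h1 i
  rw [hfe, ← Fintype.card_subtype,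
    card_two_to_one n (fun j => v j ≠ 0), Fintype.card_subtype]

end aux

lemma sInf_two_mul (S : Set ℕ) : sInf ((fun r => 2 * r) '' S) = 2 * sInf S := by
  rcases S.eq_empty_or_nonempty with h | h
  · simp [h, Nat.sInf_empty]
  · apply le_antisymm
    · exact Nat.sInf_le ⟨sInf S, Nat.sInf_mem h, rfl⟩
    · obtain ⟨r, hr, heq⟩ := Nat.sInf_mem (h.image (fun r => 2 * r))
      rw [← heq]
      exact Nat.mul_le_mul_left 2 (Nat.sInf_le hr)

theorem Smap_skewCyclic_odd_equiv_additive_cyclic (n k d : ℕ) [NeZero n] (hodd : Odd n)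
    (C : Submodule F4 (Fin n → F4))
    (hskew : ∀ v ∈ C, (fun i : Fin n => (v (i - 1)) ^ 2) ∈ C)
    (hk : Module.finrank F4 C = k)
    (hd : minWt (C : Set (Fin n → F4)) = d) :
    ∃ π : Equiv.Perm (Fin (2 * n)),
      (0 : Fin (2 * n) → F4) ∈ permCode π (Smap n '' (C : Set (Fin n → F4))) ∧
      (∀ u ∈ permCode π (Smap n '' (C : Set (Fin n → F4))),
        ∀ w ∈ permCode π (Smap n '' (C : Set (Fin n → F4))),
          u + w ∈ permCode π (Smap n '' (C : Set (Fin n → F4)))) ∧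
      (∀ u ∈ permCode π (Smap n '' (C : Set (Fin n → F4))),
          -u ∈ permCode π (Smap n '' (C : Set (Fin n → F4)))) ∧
      (∀ w ∈ permCode π (Smap n '' (C : Set (Fin n → F4))),
          (fun i : Fin (2 * n) => w (i - 1)) ∈
            permCode π (Smap n '' (C : Set (Fin n → F4)))) ∧
      (permCode π (Smap n '' (C : Set (Fin n → F4)))).ncard = 2 ^ (2 * k) ∧
      minWt (permCode π (Smap n '' (C : Set (Fin n → F4)))) = 2 * d := by
  classical
  have hset : permCode (piPerm n hodd) (Smap n '' (C : Set (Fin n → F4)))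
      = gmap n '' (C : Set (Fin n → F4)) := by
    unfold permCode
    rw [Set.image_image]
    exact Set.image_congr fun v _ => Smap_piPerm n hodd v
  refine ⟨piPerm n hodd, ?_, ?_, ?_, ?_, ?_, ?_⟩
  · rw [hset]
    exact ⟨0, C.zero_mem, gmap_zero n⟩
  · rw [hset]
    rintro u ⟨v, hv, rfl⟩ w ⟨v', hv', rfl⟩
    exact ⟨v + v', C.add_mem hv hv', gmap_add n v v'⟩
  · rw [hset]
    intro u hu
    have : -u = u := by funext i; exact F4_neg (u i)
    rwa [this]
  · rw [hset]
    rintro w ⟨v, hv, rfl⟩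
    exact ⟨fun j => v (j - 1) ^ 2, hskew v hv, (gmap_shift n v).symm⟩
  · rw [hset, Set.ncard_image_of_injective _ (gmap_injective n hodd)]
    have hfin : Fintype ↥C := Fintype.ofFinite _
    have : (C : Set (Fin n → F4)).ncard = Fintype.card ↥C := by
      rw [← Nat.card_coe_set_eq, Nat.card_eq_fintype_card]
      exact Fintype.card_congr (Equiv.refl _)
    rw [this, Module.card_eq_pow_finrank (K := F4), F4_card, hk, pow_mul]
    norm_num
  · rw [hset]
    unfold minWt
    have himg : {r : ℕ | ∃ u ∈ gmap n '' (C : Set (Fin n → F4)),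
        u ≠ 0 ∧ r = hammingNorm u}
        = (fun r => 2 * r) ''
          {r : ℕ | ∃ v ∈ (C : Set (Fin n → F4)), v ≠ 0 ∧ r = hammingNorm v} := by
      ext r
      constructor
      · rintro ⟨u, ⟨v, hv, rfl⟩, hne, rfl⟩
        exact ⟨hammingNorm v, ⟨v, hv, fun h0 => hne (by rw [h0, gmap_zero]), rfl⟩,
          (gmap_norm n v).symm⟩
      · rintro ⟨s, ⟨v, hv, hne, rfl⟩, rfl⟩
        exact ⟨gmap n v, ⟨v, hv, rfl⟩,
          fun h0 => hne (gmap_injective n hodd (h0.trans (gmap_zero n).symm)),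
          (gmap_norm n v).symm⟩
    rw [himg, sInf_two_mul]
    unfold minWt at hd
    rw [hd]
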